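/- arXiv:2206.03688 — 2 statements merged into one kernel-verified Lean document; each statement's English description precedes it below -/
import Mathlib

section
/- For any W, W̃ ∈ ℝ^{d×m} and any points x₁,…,x_n ∈ S^{d−1}(√d), max_{i∈[n]} |⟨∇_W f(x_i;W), W̃⟩| ≤ C·( n^{1/2}·(E_n[(f_L(x;W̃))²])^{1/2} + d·n^{1/2}·m^{−1/2}·‖W‖_F·‖W̃‖_F ) for an absolute constant C, where ⟨·,·⟩ is the Frobenius inner product. -/
open MeasureTheory Finset
open scoped ENNReal NNReal

noncomputable section

namespace NTKQuad

/-- Euclidean dot product of two finitely-indexed real vectors. -/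
def dot {α : Type*} [Fintype α] (u v : α → ℝ) : ℝ := ∑ j, u j * v j

/-- Squared Euclidean norm. -/
def sq2 {α : Type*} [Fintype α] (u : α → ℝ) : ℝ := ∑ j, (u j) ^ 2

/-- Frobenius norm of a weight matrix, viewed as the family of its columns. -/
def frob {ι δ : Type*} [Fintype ι] [Fintype δ] (W : ι → δ → ℝ) : ℝ :=
  Real.sqrt (∑ r, sq2 (W r))

/-- `‖W‖_{2,4}^4 = ∑_r ‖w_r‖₂⁴`. -/
def n244 {ι δ : Type*} [Fintype ι] [Fintype δ] (W : ι → δ → ℝ) : ℝ :=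
  ∑ r, (sq2 (W r)) ^ 2

/-- `‖W‖_{2,4}`. -/
def n24 {ι δ : Type*} [Fintype ι] [Fintype δ] (W : ι → δ → ℝ) : ℝ :=
  n244 W ^ ((1 : ℝ) / 4)

/-- `‖W‖_{2,∞} = max_r ‖w_r‖₂`. -/
def n2inf {ι δ : Type*} [Fintype ι] [Fintype δ] (W : ι → δ → ℝ) : ℝ :=
  ⨆ r, Real.sqrt (sq2 (W r))

/-- `μ` is the uniform probability measure on the centered sphere of squared radius `c` in `ℝ^d`:
it is a probability measure, it is carried by the sphere, and it is invariant under every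
orthogonal transformation. -/
def IsUniformSphere {d : ℕ} (μ : Measure (Fin d → ℝ)) (c : ℝ) : Prop :=
  IsProbabilityMeasure μ ∧ (∀ᵐ x ∂μ, sq2 x = c) ∧
    ∀ A ∈ Matrix.orthogonalGroup (Fin d) ℝ, μ.map (fun x => A.mulVec x) = μ

/-- The two-layer network `f(x;W)`. -/
def fnet {d : ℕ} {ι : Type*} [Fintype ι] (a : ι → ℝ) (W0 : ι → Fin d → ℝ) (act : ℝ → ℝ)
    (W : ι → Fin d → ℝ) (x : Fin d → ℝ) : ℝ :=
  (Real.sqrt (Fintype.card ι))⁻¹ * ∑ r, a r * act (dot (W0 r) x + dot (W r) x)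

/-- The linear (NTK) term `f_L(x;W)`; `act'` plays the role of `σ′`. -/
def fL {d : ℕ} {ι : Type*} [Fintype ι] (a : ι → ℝ) (W0 : ι → Fin d → ℝ) (act' : ℝ → ℝ)
    (W : ι → Fin d → ℝ) (x : Fin d → ℝ) : ℝ :=
  (Real.sqrt (Fintype.card ι))⁻¹ * ∑ r, a r * act' (dot (W0 r) x) * dot (W r) x

/-- The quadratic (QuadNTK) term `f_Q(x;W)`; `act''` plays the role of `σ″`. -/
def fQ {d : ℕ} {ι : Type*} [Fintype ι] (a : ι → ℝ) (W0 : ι → Fin d → ℝ) (act'' : ℝ → ℝ)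
    (W : ι → Fin d → ℝ) (x : Fin d → ℝ) : ℝ :=
  (2 * Real.sqrt (Fintype.card ι))⁻¹ * ∑ r, a r * act'' (dot (W0 r) x) * (dot (W r) x) ^ 2

/-- Second-layer weights of the symmetric initialization: `+1` on the first half,
`-1` on the second half. The width is `m = 2M` and neurons are indexed by `Fin 2 × Fin M`. -/
def aSym (M : ℕ) : Fin 2 × Fin M → ℝ := fun p => if p.1 = 0 then 1 else -1

/-- First-layer weights of the symmetric initialization, duplicating `u`. -/
def W0Sym {d : ℕ} (M : ℕ) (u : Fin M → Fin d → ℝ) : Fin 2 × Fin M → Fin d → ℝ :=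
  fun p => u p.2

/-- `B(d,ℓ)`, the dimension of degree-`ℓ` spherical harmonics. -/
def Bdim (d ℓ : ℕ) : ℕ :=
  if ℓ = 0 then 1 else ((2 * ℓ + d - 2) * Nat.choose (ℓ + d - 3) (ℓ - 1)) / ℓ

/-- `n_k = ∑_{ℓ ≤ k} B(d,ℓ)`. -/
def nk (d k : ℕ) : ℕ := ∑ ℓ ∈ Finset.range (k + 1), Bdim d ℓ

/-- The NTK feature map `φ(x) ∈ ℝ^{m d}`. -/
def phi {d : ℕ} {ι : Type*} [Fintype ι] (a : ι → ℝ) (W0 : ι → Fin d → ℝ) (act' : ℝ → ℝ)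
    (x : Fin d → ℝ) : ι × Fin d → ℝ :=
  fun p => (Real.sqrt (Fintype.card ι))⁻¹ * a p.1 * act' (dot (W0 p.1) x) * x p.2

/-- The feature covariance matrix `Σ = E_μ[φ(x)φ(x)ᵀ]`. -/
def SigmaMat {d : ℕ} {ι : Type*} [Fintype ι] (μ : Measure (Fin d → ℝ))
    (a : ι → ℝ) (W0 : ι → Fin d → ℝ) (act' : ℝ → ℝ) :
    Matrix (ι × Fin d) (ι × Fin d) ℝ :=
  Matrix.of fun p q => ∫ x, phi a W0 act' x p * phi a W0 act' x q ∂μ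

/-- `(lam, v)` is an orthonormal eigendecomposition of the symmetric matrix `A`
with eigenvalues sorted in decreasing order. -/
def IsEigenDecomp {β : Type*} [Fintype β] [DecidableEq β] (A : Matrix β β ℝ)
    (lam : Fin (Fintype.card β) → ℝ) (v : Fin (Fintype.card β) → β → ℝ) : Prop :=
  Antitone lam ∧ (∀ i j, dot (v i) (v j) = if i = j then (1 : ℝ) else 0) ∧
    (∀ i, A.mulVec (v i) = lam i • v i) ∧
    (∑ i, Matrix.vecMulVec (v i) (v i)) = (1 : Matrix β β ℝ)

/-- Orthogonal projection onto the span of the first `r` (sorted) eigenvectors. -/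
def projTop {β : Type*} [Fintype β] [DecidableEq β]
    (v : Fin (Fintype.card β) → β → ℝ) (r : ℕ) : Matrix β β ℝ :=
  ∑ i ∈ Finset.univ.filter (fun i : Fin (Fintype.card β) => (i : ℕ) < r),
    Matrix.vecMulVec (v i) (v i)

/-- Apply an `md × md` matrix to (the vectorization of) a weight matrix. -/
def applyMat {d : ℕ} {ι : Type*} [Fintype ι] (P : Matrix (ι × Fin d) (ι × Fin d) ℝ)
    (W : ι → Fin d → ℝ) : ι → Fin d → ℝ :=
  fun r j => P.mulVec (fun p => W p.1 p.2) (r, j)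

/-- The coordinate direction `e_{r,j}` in weight space. -/
def coordE {d : ℕ} {ι : Type*} [DecidableEq ι] (r : ι) (j : Fin d) : ι → Fin d → ℝ :=
  fun r' j' => if r' = r ∧ j' = j then 1 else 0

/-- The gradient of `F` at `W`, whose `(r,j)` entry is the partial derivative of `F`
in the coordinate direction `e_{r,j}`. -/
def gradAt {d : ℕ} {ι : Type*} [Fintype ι] [DecidableEq ι]
    (F : (ι → Fin d → ℝ) → ℝ) (W : ι → Fin d → ℝ) : ι → Fin d → ℝ :=
  fun r j => deriv (fun t : ℝ => F (W + t • coordE r j)) 0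

/-- Frobenius inner product of weight matrices. -/
def dotW {d : ℕ} {ι : Type*} [Fintype ι] (A B : ι → Fin d → ℝ) : ℝ :=
  ∑ r, dot (A r) (B r)

/-- Hessian quadratic form `∇²F(W)[A,A]`, as the second derivative of `t ↦ F(W + tA)` at `0`. -/
def hessForm {d : ℕ} {ι : Type*} [Fintype ι]
    (F : (ι → Fin d → ℝ) → ℝ) (W A : ι → Fin d → ℝ) : ℝ :=
  iteratedDeriv 2 (fun t : ℝ => F (W + t • A)) 0

/-- `±1` vector associated to a boolean sign pattern. -/
def signv {ι : Type*} (s : ι → Bool) : ι → ℝ := fun r => if s r then 1 else -1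

/-- `W S`: rescale the `r`-th column of `W` by the sign `s r`. -/
def colScale {d : ℕ} {ι : Type*} (s : ι → Bool) (W : ι → Fin d → ℝ) : ι → Fin d → ℝ :=
  fun r j => signv s r * W r j

/-- Expectation over a uniformly random diagonal `±1` sign matrix `S`. -/
def ESavg {ι : Type*} [Fintype ι] [DecidableEq ι] (g : (ι → Bool) → ℝ) : ℝ :=
  (∑ s : ι → Bool, g s) / (Fintype.card (ι → Bool) : ℝ)

/-- The `ℓ`-th coefficient of `g` in the orthonormal Hermite basis of `L²(N(0,1))`. -/
def hermCoeff (g : ℝ → ℝ) (ℓ : ℕ) : ℝ :=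
  ∫ t, g t * (Polynomial.aeval t (Polynomial.hermite ℓ) / Real.sqrt (Nat.factorial ℓ))
    ∂(ProbabilityTheory.gaussianReal 0 1)

/-- Assumption A: `μ_ℓ(g) ≠ 0` for all `ℓ ≤ 4k`, and `∑_{ℓ > 4k} μ_ℓ(g)² > 0`. -/
def AssumptionA (g : ℝ → ℝ) (k : ℕ) : Prop :=
  (∀ ℓ ≤ 4 * k, hermCoeff g ℓ ≠ 0) ∧ (∃ ℓ, 4 * k < ℓ ∧ hermCoeff g ℓ ≠ 0)

/-- `Q` is the family of Gegenbauer polynomials for dimension `d`: `Q ℓ` has degree `ℓ`,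
is normalized by `Q ℓ (d) = 1`, and the family is orthogonal with
`⟨Q i, Q j⟩ = δ_{ij}/B(d,i)` with respect to `τ`, the law of `⟨x,e⟩` for `x` uniform
on the sphere of radius `√d`. -/
def IsGegenbauer (d : ℕ) (τ : Measure ℝ) (Q : ℕ → Polynomial ℝ) : Prop :=
  (∀ ℓ, (Q ℓ).natDegree = ℓ) ∧ (∀ ℓ, (Q ℓ).eval (d : ℝ) = 1) ∧
    ∀ i j, (∫ t, (Q i).eval (Real.sqrt d * t) * (Q j).eval (Real.sqrt d * t) ∂τ) =
      if i = j then ((Bdim d i : ℝ))⁻¹ else 0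

/-- The Gegenbauer coefficient `λ_{d,ℓ}(g)`. -/
def gegCoeff (d : ℕ) (τ : Measure ℝ) (Q : ℕ → Polynomial ℝ) (g : ℝ → ℝ) (ℓ : ℕ) : ℝ :=
  ∫ t, g t * (Q ℓ).eval (Real.sqrt d * t) ∂τ

/-- Assumption B: `d^{k−1}·min_{ℓ ≤ k−1} λ_{d,ℓ}(g)² ≥ c₀`. -/
def AssumptionB (d k : ℕ) (τ : Measure ℝ) (Q : ℕ → Polynomial ℝ) (g : ℝ → ℝ) (c₀ : ℝ) : Prop :=
  ∀ ℓ < k, c₀ ≤ (d : ℝ) ^ (k - 1) * (gegCoeff d τ Q g ℓ) ^ 2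

/-- The product Gaussian measure on `d × m` matrices with entrywise variance `v`. -/
def gaussMat (ι : Type*) [Fintype ι] (d : ℕ) (v : NNReal) : Measure (ι → Fin d → ℝ) :=
  Measure.pi fun _ : ι => Measure.pi fun _ : Fin d => ProbabilityTheory.gaussianReal 0 v

/-- `P` is the law of an i.i.d. sequence with common marginal `Q`. -/
def IsIIDSeq {γ : Type*} [MeasurableSpace γ] (P : Measure (ℕ → γ)) (Q : Measure γ) : Prop :=
  IsProbabilityMeasure P ∧
    ∀ T : ℕ, P.map (fun ξ (i : Fin T) => ξ (i : ℕ)) = Measure.pi fun _ : Fin T => Q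

/-- Perturbed gradient descent iterates, started at `0`. -/
def pgd {d : ℕ} {ι : Type*} [Fintype ι] [DecidableEq ι]
    (F : (ι → Fin d → ℝ) → ℝ) (η : ℝ) (ξ : ℕ → ι → Fin d → ℝ) : ℕ → ι → Fin d → ℝ
  | 0 => 0
  | t + 1 => pgd F η ξ t - η • (gradAt F (pgd F η ξ t) + ξ t)

/-- Empirical average of `n` numbers. -/
def Eemp {n : ℕ} (g : Fin n → ℝ) : ℝ := (n : ℝ)⁻¹ * ∑ i, g i


/-- `⟨∇_W f(x;W), W̃⟩`, the directional derivative of the network in direction `W̃`. -/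
def dft {d : ℕ} {ι : Type*} [Fintype ι] (a : ι → ℝ) (W0 : ι → Fin d → ℝ) (σ' : ℝ → ℝ)
    (W Wt : ι → Fin d → ℝ) (x : Fin d → ℝ) : ℝ :=
  (Real.sqrt (Fintype.card ι))⁻¹ * ∑ r, a r * σ' (dot (W0 r) x + dot (W r) x) * dot (Wt r) x

lemma sq2_nonneg {α : Type*} [Fintype α] (u : α → ℝ) : 0 ≤ sq2 u :=
  Finset.sum_nonneg fun _ _ => sq_nonneg _

lemma abs_dot_le {α : Type*} [Fintype α] (u v : α → ℝ) :
    |dot u v| ≤ Real.sqrt (sq2 u) * Real.sqrt (sq2 v) := by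
  have h := Finset.sum_mul_sq_le_sq_mul_sq Finset.univ u v
  rw [← Real.sqrt_sq_eq_abs, ← Real.sqrt_mul (sq2_nonneg u)]
  exact Real.sqrt_le_sqrt h

lemma sum_sqrt_le_frob {ι δ : Type*} [Fintype ι] [Fintype δ] (W Wt : ι → δ → ℝ) :
    ∑ r, Real.sqrt (sq2 (W r)) * Real.sqrt (sq2 (Wt r)) ≤ frob W * frob Wt := by
  have h := Finset.sum_mul_sq_le_sq_mul_sq Finset.univ
    (fun r => Real.sqrt (sq2 (W r))) (fun r => Real.sqrt (sq2 (Wt r)))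
  simp only [Real.sq_sqrt (sq2_nonneg _)] at h
  have hnn : 0 ≤ ∑ r, Real.sqrt (sq2 (W r)) * Real.sqrt (sq2 (Wt r)) :=
    Finset.sum_nonneg fun _ _ => mul_nonneg (Real.sqrt_nonneg _) (Real.sqrt_nonneg _)
  calc ∑ r, Real.sqrt (sq2 (W r)) * Real.sqrt (sq2 (Wt r))
      = Real.sqrt ((∑ r, Real.sqrt (sq2 (W r)) * Real.sqrt (sq2 (Wt r))) ^ 2) :=
        (Real.sqrt_sq hnn).symm
    _ ≤ Real.sqrt ((∑ r, sq2 (W r)) * ∑ r, sq2 (Wt r)) := Real.sqrt_le_sqrt h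
    _ = frob W * frob Wt := Real.sqrt_mul (Finset.sum_nonneg fun _ _ => sq2_nonneg _) _

/-- `max_i |⟨∇_W f(x_i;W), W̃⟩| ≤
C (√n (E_n[(f_L(x;W̃))²])^{1/2} + d √n m^{−1/2} ‖W‖_F ‖W̃‖_F)`. -/
theorem statement14 :
    ∃ C : ℝ, 0 < C ∧
      ∀ (d m n : ℕ) (a : Fin m → ℝ) (W0 : Fin m → Fin d → ℝ)
        (σ σ' σ'' : ℝ → ℝ) (x : Fin n → Fin d → ℝ) (W Wt : Fin m → Fin d → ℝ),
        2 ≤ d → Even m →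
        (∀ r, a r = 1 ∨ a r = -1) → (∀ r, sq2 (W0 r) = 1) →
        (∀ t, HasDerivAt σ (σ' t) t) → (∀ t, HasDerivAt σ' (σ'' t) t) →
        (∀ t, |σ' t| ≤ 1) → (∀ t, |σ'' t| ≤ 1) →
        (∀ i, sq2 (x i) = (d : ℝ)) →
        ∀ i : Fin n,
          |dft a W0 σ' W Wt (x i)| ≤
            C * (Real.sqrt n * Real.sqrt (Eemp (fun i => (fL a W0 σ' Wt (x i)) ^ 2)) +
              (d : ℝ) * Real.sqrt n * (Real.sqrt m)⁻¹ * frob W * frob Wt) := by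
  refine ⟨1, one_pos, ?_⟩
  intro d m n a W0 σ σ' σ'' x W Wt hd hm ha hW0 hσ hσ' hb1 hb2 hx i
  have hn : 0 < n := i.pos
  have hn1 : (1 : ℝ) ≤ Real.sqrt n := by
    rw [show (1:ℝ) = Real.sqrt 1 by simp]
    exact Real.sqrt_le_sqrt (by exact_mod_cast hn)
  -- σ' is 1-Lipschitz
  have hlip : ∀ s t : ℝ, |σ' s - σ' t| ≤ |s - t| := by
    have hL : LipschitzWith 1 σ' := by
      refine lipschitzWith_of_nnnorm_deriv_le (fun t => (hσ' t).differentiableAt) fun t => ?_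
      rw [(hσ' t).deriv]
      rw [← NNReal.coe_le_coe]
      simpa [Real.norm_eq_abs] using hb2 t
    intro s t
    have := hL.dist_le_mul s t
    simpa [Real.dist_eq] using this
  set EE := Eemp (fun j => (fL a W0 σ' Wt (x j)) ^ 2) with hEE
  have hEEnn : 0 ≤ EE := by
    refine mul_nonneg (by positivity) (Finset.sum_nonneg fun _ _ => sq_nonneg _)
  -- Step A: |fL (x i)| ≤ √n √EE
  have hA : |fL a W0 σ' Wt (x i)| ≤ Real.sqrt n * Real.sqrt EE := by
    have h1 : (fL a W0 σ' Wt (x i)) ^ 2 ≤ ∑ j, (fL a W0 σ' Wt (x j)) ^ 2 :=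
      Finset.single_le_sum (f := fun j => (fL a W0 σ' Wt (x j)) ^ 2)
        (fun _ _ => sq_nonneg _) (Finset.mem_univ i)
    have h2 : (n : ℝ) * EE = ∑ j, (fL a W0 σ' Wt (x j)) ^ 2 := by
      rw [hEE, Eemp, ← mul_assoc, mul_inv_cancel₀ (by exact_mod_cast hn.ne'), one_mul]
    rw [← Real.sqrt_sq_eq_abs, ← Real.sqrt_mul (Nat.cast_nonneg n)]
    exact Real.sqrt_le_sqrt (by rw [h2]; exact h1)
  -- Step B: |dft - fL| ≤ (√m)⁻¹ * (d * (frob W * frob Wt))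
  have hB : |dft a W0 σ' W Wt (x i) - fL a W0 σ' Wt (x i)| ≤
      (Real.sqrt m)⁻¹ * ((d : ℝ) * (frob W * frob Wt)) := by
    have hsum : |∑ r, a r * σ' (dot (W0 r) (x i) + dot (W r) (x i)) * dot (Wt r) (x i)
        - ∑ r, a r * σ' (dot (W0 r) (x i)) * dot (Wt r) (x i)|
        ≤ (d : ℝ) * (frob W * frob Wt) := by
      rw [← Finset.sum_sub_distrib]
      calc |∑ r, (a r * σ' (dot (W0 r) (x i) + dot (W r) (x i)) * dot (Wt r) (x i)
              - a r * σ' (dot (W0 r) (x i)) * dot (Wt r) (x i))|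
          ≤ ∑ r, |a r * σ' (dot (W0 r) (x i) + dot (W r) (x i)) * dot (Wt r) (x i)
              - a r * σ' (dot (W0 r) (x i)) * dot (Wt r) (x i)| :=
            Finset.abs_sum_le_sum_abs _ _
        _ ≤ ∑ r, (d : ℝ) * (Real.sqrt (sq2 (W r)) * Real.sqrt (sq2 (Wt r))) := by
            refine Finset.sum_le_sum fun r _ => ?_
            have har : |a r| = 1 := by rcases ha r with h | h <;> simp [h]
            have heq : a r * σ' (dot (W0 r) (x i) + dot (W r) (x i)) * dot (Wt r) (x i)
                - a r * σ' (dot (W0 r) (x i)) * dot (Wt r) (x i)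
                = a r * ((σ' (dot (W0 r) (x i) + dot (W r) (x i))
                    - σ' (dot (W0 r) (x i))) * dot (Wt r) (x i)) := by ring
            rw [heq, abs_mul, har, one_mul, abs_mul]
            have hs : |σ' (dot (W0 r) (x i) + dot (W r) (x i)) - σ' (dot (W0 r) (x i))|
                ≤ |dot (W r) (x i)| := by
              have := hlip (dot (W0 r) (x i) + dot (W r) (x i)) (dot (W0 r) (x i))
              simpa using this
            have hW : |dot (W r) (x i)| ≤ Real.sqrt (sq2 (W r)) * Real.sqrt (d : ℝ) := by
              have := abs_dot_le (W r) (x i); rwa [hx i] at this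
            have hWt : |dot (Wt r) (x i)| ≤ Real.sqrt (sq2 (Wt r)) * Real.sqrt (d : ℝ) := by
              have := abs_dot_le (Wt r) (x i); rwa [hx i] at this
            calc |σ' (dot (W0 r) (x i) + dot (W r) (x i)) - σ' (dot (W0 r) (x i))|
                  * |dot (Wt r) (x i)|
                ≤ (Real.sqrt (sq2 (W r)) * Real.sqrt (d : ℝ))
                  * (Real.sqrt (sq2 (Wt r)) * Real.sqrt (d : ℝ)) := by
                  exact mul_le_mul (hs.trans hW) hWt (abs_nonneg _) (by positivity)
              _ = Real.sqrt (d : ℝ) * Real.sqrt (d : ℝ)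
                  * (Real.sqrt (sq2 (W r)) * Real.sqrt (sq2 (Wt r))) := by ring
              _ = (d : ℝ) * (Real.sqrt (sq2 (W r)) * Real.sqrt (sq2 (Wt r))) := by
                  rw [Real.mul_self_sqrt (Nat.cast_nonneg d)]
        _ = (d : ℝ) * ∑ r, Real.sqrt (sq2 (W r)) * Real.sqrt (sq2 (Wt r)) := by
            rw [Finset.mul_sum]
        _ ≤ (d : ℝ) * (frob W * frob Wt) := by
            exact mul_le_mul_of_nonneg_left (sum_sqrt_le_frob W Wt) (Nat.cast_nonneg d)
    have hrw : dft a W0 σ' W Wt (x i) - fL a W0 σ' Wt (x i)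
        = (Real.sqrt m)⁻¹ * (∑ r, a r * σ' (dot (W0 r) (x i) + dot (W r) (x i)) * dot (Wt r) (x i)
          - ∑ r, a r * σ' (dot (W0 r) (x i)) * dot (Wt r) (x i)) := by
      simp only [dft, fL, Fintype.card_fin]; ring
    rw [hrw, abs_mul, abs_inv, abs_of_nonneg (Real.sqrt_nonneg _)]
    exact mul_le_mul_of_nonneg_left hsum (by positivity)
  -- combine
  have hfrob : 0 ≤ (Real.sqrt m)⁻¹ * ((d : ℝ) * (frob W * frob Wt)) := by
    have : (0:ℝ) ≤ frob W := Real.sqrt_nonneg _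
    have : (0:ℝ) ≤ frob Wt := Real.sqrt_nonneg _
    positivity
  calc |dft a W0 σ' W Wt (x i)|
      ≤ |fL a W0 σ' Wt (x i)| + |dft a W0 σ' W Wt (x i) - fL a W0 σ' Wt (x i)| := by
        have := abs_add_le (fL a W0 σ' Wt (x i)) (dft a W0 σ' W Wt (x i) - fL a W0 σ' Wt (x i))
        simpa using this
    _ ≤ Real.sqrt n * Real.sqrt EE + (Real.sqrt m)⁻¹ * ((d : ℝ) * (frob W * frob Wt)) :=
        add_le_add hA hB
    _ ≤ Real.sqrt n * Real.sqrt EE +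
        (d : ℝ) * Real.sqrt n * (Real.sqrt m)⁻¹ * frob W * frob Wt := by
        refine add_le_add_right ?_ _
        have h1 : (Real.sqrt m)⁻¹ * ((d : ℝ) * (frob W * frob Wt))
            = (d : ℝ) * 1 * (Real.sqrt m)⁻¹ * frob W * frob Wt := by ring
        rw [h1]
        have hfW : (0:ℝ) ≤ frob W := Real.sqrt_nonneg _
        have hfWt : (0:ℝ) ≤ frob Wt := Real.sqrt_nonneg _
        gcongr
    _ = 1 * (Real.sqrt n * Real.sqrt EE +
        (d : ℝ) * Real.sqrt n * (Real.sqrt m)⁻¹ * frob W * frob Wt) := by ring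

end NTKQuad
end
end

section
/- Suppose the points x₁,…,x_n ∈ S^{d−1}(√d) satisfy ‖E_n[x xᵀ] − I_d‖_op ≤ 1/2. Then for every W ∈ ℝ^{d×m}: E_S[E_n[(f_L(x; WS))²]] ≤ C·‖W‖_F²/m and E_S[E_{x∼μ}[(f_L(x; WS))²]] ≤ C·‖W‖_F²/m for an absolute constant C, where S is uniformly distributed over diagonal ±1 matrices in ℝ^{m×m} and WS denotes the displacement whose r-th column is S_{rr}·w_r. -/
open MeasureTheory Finset
open scoped ENNReal NNReal

noncomputable section

namespace NTKQuad

section Helpers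

lemma sum_sign_mul {m : ℕ} (r r' : Fin m) :
    ∑ s : Fin m → Bool, signv s r * signv s r' = if r = r' then (2:ℝ)^m else 0 := by
  by_cases hrr : r = r'
  · subst hrr
    simp only [if_pos rfl]
    have : ∀ s : Fin m → Bool, signv s r * signv s r = 1 := by
      intro s; simp [signv]; cases s r <;> norm_num
    rw [Finset.sum_congr rfl fun s _ => this s]
    simp [Fintype.card_fun]
  · rw [if_neg hrr]
    apply Finset.sum_ninvolution (fun s => Function.update s r (!s r))
    · intro s
      have h1 : signv (Function.update s r (!s r)) r = - signv s r := by
        simp [signv]; cases s r <;> norm_num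
      have h2 : signv (Function.update s r (!s r)) r' = signv s r' := by
        simp [signv, Function.update_of_ne (Ne.symm hrr)]
      rw [h1, h2]; ring
    · intro s _ heq
      have := congrFun heq r
      simp at this
    · intro s; exact Finset.mem_univ _
    · intro s
      ext t
      by_cases h : t = r
      · subst h; simp
      · simp [Function.update_of_ne h]

lemma sign_orth {m : ℕ} (h : Fin m → ℝ) :
    ∑ s : Fin m → Bool, (∑ r, signv s r * h r)^2 = 2^m * ∑ r, (h r)^2 := by
  calc ∑ s : Fin m → Bool, (∑ r, signv s r * h r)^2
      = ∑ s : Fin m → Bool, ∑ r, ∑ r', (h r * h r') * (signv s r * signv s r') := by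
        refine Finset.sum_congr rfl fun s _ => ?_
        rw [sq, Finset.sum_mul_sum]
        exact Finset.sum_congr rfl fun r _ => Finset.sum_congr rfl fun r' _ => by ring
    _ = ∑ r, ∑ r', (h r * h r') * ∑ s : Fin m → Bool, (signv s r * signv s r') := by
        rw [Finset.sum_comm]
        refine Finset.sum_congr rfl fun r _ => ?_
        rw [Finset.sum_comm]
        exact Finset.sum_congr rfl fun r' _ => (Finset.mul_sum _ _ _).symm
    _ = 2^m * ∑ r, (h r)^2 := by
        simp only [sum_sign_mul, mul_ite, mul_zero]
        rw [Finset.mul_sum]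
        refine Finset.sum_congr rfl fun r _ => ?_
        rw [Finset.sum_ite_eq Finset.univ r]
        simp; ring


lemma sum_fL_sq {d m : ℕ} (a : Fin m → ℝ) (W0 : Fin m → Fin d → ℝ) (σ' : ℝ → ℝ)
    (W : Fin m → Fin d → ℝ) (x : Fin d → ℝ) :
    ∑ s : Fin m → Bool, (fL a W0 σ' (colScale s W) x)^2
      = 2^m * ((m:ℝ)⁻¹ * ∑ r, (a r * σ' (dot (W0 r) x) * dot (W r) x)^2) := by
  have hfl : ∀ s : Fin m → Bool, fL a W0 σ' (colScale s W) x
      = (Real.sqrt m)⁻¹ * ∑ r, signv s r * (a r * σ' (dot (W0 r) x) * dot (W r) x) := by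
    intro s
    simp only [fL, Fintype.card_fin]
    congr 1
    refine Finset.sum_congr rfl fun r _ => ?_
    have : dot (colScale s W r) x = signv s r * dot (W r) x := by
      simp only [dot, colScale, Finset.mul_sum]
      exact Finset.sum_congr rfl fun j _ => by ring
    rw [this]; ring
  have hsq : ((Real.sqrt m)⁻¹)^2 = (m:ℝ)⁻¹ := by
    rw [inv_pow, Real.sq_sqrt (Nat.cast_nonneg m)]
  calc ∑ s : Fin m → Bool, (fL a W0 σ' (colScale s W) x)^2
      = ∑ s : Fin m → Bool, ((Real.sqrt m)⁻¹)^2 *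
          (∑ r, signv s r * (a r * σ' (dot (W0 r) x) * dot (W r) x))^2 := by
        refine Finset.sum_congr rfl fun s _ => ?_; rw [hfl s, mul_pow]
    _ = ((Real.sqrt m)⁻¹)^2 * ∑ s : Fin m → Bool,
          (∑ r, signv s r * (a r * σ' (dot (W0 r) x) * dot (W r) x))^2 := by
        rw [Finset.mul_sum]
    _ = 2^m * ((m:ℝ)⁻¹ * ∑ r, (a r * σ' (dot (W0 r) x) * dot (W r) x)^2) := by
        rw [sign_orth, hsq]; ring

lemma sum_fL_sq_le {d m : ℕ} {a : Fin m → ℝ} (W0 : Fin m → Fin d → ℝ) {σ' : ℝ → ℝ}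
    (W : Fin m → Fin d → ℝ) (x : Fin d → ℝ)
    (ha : ∀ r, a r = 1 ∨ a r = -1) (hσ : ∀ t, |σ' t| ≤ 1) :
    ∑ s : Fin m → Bool, (fL a W0 σ' (colScale s W) x)^2
      ≤ 2^m * ((m:ℝ)⁻¹ * ∑ r, (dot (W r) x)^2) := by
  rw [sum_fL_sq]
  have h2 : (0:ℝ) ≤ 2^m := by positivity
  have hm : (0:ℝ) ≤ (m:ℝ)⁻¹ := by positivity
  refine mul_le_mul_of_nonneg_left (mul_le_mul_of_nonneg_left ?_ hm) h2
  refine Finset.sum_le_sum fun r _ => ?_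
  have hab : |a r * σ' (dot (W0 r) x)| ≤ 1 := by
    rw [abs_mul]
    have : |a r| = 1 := by rcases ha r with h | h <;> simp [h]
    rw [this, one_mul]; exact hσ _
  calc (a r * σ' (dot (W0 r) x) * dot (W r) x)^2
      = (a r * σ' (dot (W0 r) x))^2 * (dot (W r) x)^2 := by ring
    _ ≤ 1 * (dot (W r) x)^2 := by
        refine mul_le_mul_of_nonneg_right ?_ (sq_nonneg _)
        nlinarith [abs_nonneg (a r * σ' (dot (W0 r) x)),
          sq_abs (a r * σ' (dot (W0 r) x))]
    _ = (dot (W r) x)^2 := one_mul _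

lemma quad_emp {d n : ℕ} (x : Fin n → Fin d → ℝ) (z : Fin d → ℝ) :
    Eemp (fun t => (dot z (x t))^2)
      = dot z ((Matrix.of fun i j => Eemp fun t => x t i * x t j).mulVec z) := by
  simp only [Eemp, dot, Matrix.mulVec, dotProduct, Matrix.of_apply]
  calc (n:ℝ)⁻¹ * ∑ t, (∑ j, z j * x t j)^2
      = ∑ t, ∑ i, ∑ j, (n:ℝ)⁻¹ * ((z i * x t i) * (z j * x t j)) := by
        rw [Finset.mul_sum]
        refine Finset.sum_congr rfl fun t _ => ?_
        rw [sq, Finset.sum_mul_sum, Finset.mul_sum]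
        exact Finset.sum_congr rfl fun i _ => Finset.mul_sum _ _ _
    _ = ∑ i, ∑ j, ∑ t, (n:ℝ)⁻¹ * ((z i * x t i) * (z j * x t j)) := by
        rw [Finset.sum_comm]
        exact Finset.sum_congr rfl fun i _ => Finset.sum_comm
    _ = ∑ i, z i * ∑ j, ((n:ℝ)⁻¹ * ∑ t, x t i * x t j) * z j := by
        refine Finset.sum_congr rfl fun i _ => ?_
        rw [Finset.mul_sum]
        refine Finset.sum_congr rfl fun j _ => ?_
        rw [Finset.mul_sum, Finset.sum_mul, Finset.mul_sum]
        exact Finset.sum_congr rfl fun t _ => by ring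

lemma mulVec_measurable {d : ℕ} (A : Matrix (Fin d) (Fin d) ℝ) :
    Measurable (fun x : Fin d → ℝ => A.mulVec x) := by
  refine measurable_pi_lambda _ fun i => ?_
  simp only [Matrix.mulVec, dotProduct]
  exact Finset.measurable_sum _ fun j _ => (measurable_pi_apply j).const_mul _

lemma integral_orth_inv {d : ℕ} {μ : Measure (Fin d → ℝ)}
    (hinv : ∀ A ∈ Matrix.orthogonalGroup (Fin d) ℝ, μ.map (fun x => A.mulVec x) = μ)
    {A : Matrix (Fin d) (Fin d) ℝ} (hA : A ∈ Matrix.orthogonalGroup (Fin d) ℝ)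
    {g : (Fin d → ℝ) → ℝ} (hg : Measurable g) :
    ∫ x, g x ∂μ = ∫ x, g (A.mulVec x) ∂μ := by
  conv_lhs => rw [← hinv A hA]
  exact integral_map (mulVec_measurable A).aemeasurable
    (hg.aestronglyMeasurable.mono_ac (by rw [hinv A hA]))

lemma ae_entry_bdd {d : ℕ} {μ : Measure (Fin d → ℝ)}
    (hsph : ∀ᵐ x ∂μ, sq2 x = (d:ℝ)) (i j : Fin d) :
    ∀ᵐ x ∂μ, |x i * x j| ≤ (d:ℝ) := by
  filter_upwards [hsph] with x hx
  have hi : (x i)^2 ≤ (d:ℝ) := hx ▸ Finset.single_le_sum (f := fun k => (x k)^2)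
    (fun k _ => sq_nonneg _) (Finset.mem_univ i)
  have hj : (x j)^2 ≤ (d:ℝ) := hx ▸ Finset.single_le_sum (f := fun k => (x k)^2)
    (fun k _ => sq_nonneg _) (Finset.mem_univ j)
  rw [abs_le]
  constructor <;> nlinarith

lemma int_entry {d : ℕ} {μ : Measure (Fin d → ℝ)} [IsProbabilityMeasure μ]
    (hsph : ∀ᵐ x ∂μ, sq2 x = (d:ℝ)) (i j : Fin d) :
    Integrable (fun x : Fin d → ℝ => x i * x j) μ := by
  refine Integrable.mono' (integrable_const (d:ℝ))
    ((measurable_pi_apply i).mul (measurable_pi_apply j)).aestronglyMeasurable ?_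
  filter_upwards [ae_entry_bdd hsph i j] with x hx
  simpa only [Real.norm_eq_abs] using hx

lemma entry_offdiag {d : ℕ} {μ : Measure (Fin d → ℝ)}
    (hinv : ∀ A ∈ Matrix.orthogonalGroup (Fin d) ℝ, μ.map (fun x => A.mulVec x) = μ)
    {i j : Fin d} (hij : i ≠ j) :
    ∫ x, x i * x j ∂μ = 0 := by
  set v : Fin d → ℝ := fun k => if k = i then -1 else 1 with hv
  have hA : Matrix.diagonal v ∈ Matrix.orthogonalGroup (Fin d) ℝ := by
    rw [Matrix.mem_orthogonalGroup_iff]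
    rw [Matrix.diagonal_transpose,
      Matrix.diagonal_mul_diagonal]
    have hvv : (fun k => v k * v k) = fun _ : Fin d => (1:ℝ) := by
      funext k
      by_cases h : k = i <;> simp [hv, h]
    rw [hvv]
    exact Matrix.diagonal_one
  have hg : Measurable (fun x : Fin d → ℝ => x i * x j) :=
    (measurable_pi_apply i).mul (measurable_pi_apply j)
  have key := integral_orth_inv hinv hA hg
  have : ∫ x, ((Matrix.diagonal v).mulVec x) i * ((Matrix.diagonal v).mulVec x) j ∂μ
      = ∫ x, -(x i * x j) ∂μ := by
    refine integral_congr_ae (Filter.Eventually.of_forall fun x => ?_)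
    show (Matrix.diagonal v).mulVec x i * (Matrix.diagonal v).mulVec x j = -(x i * x j)
    rw [Matrix.mulVec_diagonal, Matrix.mulVec_diagonal]
    have h1 : v i = -1 := by simp [hv]
    have h2 : v j = 1 := by simp [hv, Ne.symm hij]
    rw [h1, h2]; ring
  rw [this, integral_neg] at key
  linarith

lemma entry_diag_eq {d : ℕ} {μ : Measure (Fin d → ℝ)}
    (hinv : ∀ A ∈ Matrix.orthogonalGroup (Fin d) ℝ, μ.map (fun x => A.mulVec x) = μ)
    (i j : Fin d) :
    ∫ x, (x i)^2 ∂μ = ∫ x, (x j)^2 ∂μ := by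
  set e := Equiv.swap i j with he
  set A : Matrix (Fin d) (Fin d) ℝ := (1 : Matrix (Fin d) (Fin d) ℝ).submatrix e id with hA
  have hAorth : A ∈ Matrix.orthogonalGroup (Fin d) ℝ := by
    rw [Matrix.mem_orthogonalGroup_iff]
    ext a b
    simp only [hA, Matrix.mul_apply, Matrix.star_eq_conjTranspose,
      Matrix.conjTranspose_apply, Matrix.transpose_apply, Matrix.submatrix_apply, id_eq, Matrix.one_apply,
      RCLike.star_def, starRingEnd_apply, star_trivial]
    rw [Finset.sum_eq_single (e a)]
    · rw [if_pos rfl, one_mul]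
      by_cases h : a = b
      · subst h; simp
      · rw [if_neg (fun hc : e b = e a => h (e.injective hc).symm), if_neg h]
    · intro c _ hc
      rw [if_neg (fun hh : e a = c => hc hh.symm), zero_mul]
    · intro hc; exact absurd (Finset.mem_univ _) hc
  have hmul : ∀ x : Fin d → ℝ, ∀ a, A.mulVec x a = x (e a) := by
    intro x a
    simp only [hA, Matrix.mulVec, dotProduct, Matrix.submatrix_apply, id_eq,
      Matrix.one_apply, ite_mul, one_mul, zero_mul]
    rw [Finset.sum_ite_eq Finset.univ (e a) x]
    simp
  have hg : Measurable (fun x : Fin d → ℝ => (x i)^2) := (measurable_pi_apply i).pow measurable_const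
  have key := integral_orth_inv hinv hAorth hg
  rw [key]
  refine integral_congr_ae (Filter.Eventually.of_forall fun x => ?_)
  show A.mulVec x i ^ 2 = x j ^ 2
  rw [hmul x i, he]
  simp [Equiv.swap_apply_left]

lemma entry_diag_one {d : ℕ} (hd : 0 < d) {μ : Measure (Fin d → ℝ)} [IsProbabilityMeasure μ]
    (hsph : ∀ᵐ x ∂μ, sq2 x = (d:ℝ))
    (hinv : ∀ A ∈ Matrix.orthogonalGroup (Fin d) ℝ, μ.map (fun x => A.mulVec x) = μ)
    (i : Fin d) :
    ∫ x, (x i)^2 ∂μ = 1 := by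
  have hsum : ∑ j : Fin d, ∫ x, (x j)^2 ∂μ = (d:ℝ) := by
    rw [← integral_finset_sum]
    · rw [show (fun x : Fin d → ℝ => ∑ j, (x j)^2) = sq2 from rfl] at *
      calc ∫ x, sq2 x ∂μ = ∫ _x, (d:ℝ) ∂μ := integral_congr_ae hsph
        _ = (d:ℝ) := by simp
    · intro j _
      have := int_entry hsph j j
      simpa [sq] using this
  have hall : ∀ j : Fin d, ∫ x, (x j)^2 ∂μ = ∫ x, (x i)^2 ∂μ :=
    fun j => entry_diag_eq hinv j i
  rw [Finset.sum_congr rfl fun j _ => hall j, Finset.sum_const, Finset.card_univ,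
    Fintype.card_fin, nsmul_eq_mul] at hsum
  have hd' : (d:ℝ) ≠ 0 := Nat.cast_ne_zero.mpr hd.ne'
  field_simp at hsum
  exact hsum

lemma second_moment {d : ℕ} (hd : 0 < d) {μ : Measure (Fin d → ℝ)}
    (hμ : IsUniformSphere μ (d:ℝ)) (w : Fin d → ℝ) :
    ∫ x, (dot w x)^2 ∂μ = sq2 w := by
  obtain ⟨hprob, hsph, hinv⟩ := hμ
  haveI := hprob
  have expand : ∀ x : Fin d → ℝ, (dot w x)^2 = ∑ i, ∑ j, (w i * w j) * (x i * x j) := by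
    intro x
    rw [dot, sq, Finset.sum_mul_sum]
    exact Finset.sum_congr rfl fun i _ => Finset.sum_congr rfl fun j _ => by ring
  calc ∫ x, (dot w x)^2 ∂μ = ∫ x, ∑ i, ∑ j, (w i * w j) * (x i * x j) ∂μ := by
        exact integral_congr_ae (Filter.Eventually.of_forall fun x => expand x)
    _ = ∑ i, ∑ j, (w i * w j) * ∫ x, x i * x j ∂μ := by
        rw [integral_finset_sum _ fun i _ => integrable_finset_sum _
          fun j _ => (int_entry hsph i j).const_mul _]
        refine Finset.sum_congr rfl fun i _ => ?_
        rw [integral_finset_sum _ fun j _ => (int_entry hsph i j).const_mul _]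
        exact Finset.sum_congr rfl fun j _ => integral_const_mul _ _
    _ = ∑ i, (w i)^2 := by
        refine Finset.sum_congr rfl fun i _ => ?_
        rw [Finset.sum_eq_single i]
        · have hii : ∫ x, x i * x i ∂μ = 1 := by
            rw [show (fun x : Fin d → ℝ => x i * x i) = (fun x => (x i)^2) from
              funext fun x => (pow_two (x i)).symm]
            exact entry_diag_one hd hsph hinv i
          rw [hii]; ring
        · intro j _ hj
          rw [entry_offdiag hinv (Ne.symm hj)]
          ring
        · intro hc; exact absurd (Finset.mem_univ _) hc
    _ = sq2 w := rfl

lemma int_dot_sq {d : ℕ} {μ : Measure (Fin d → ℝ)} [IsProbabilityMeasure μ]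
    (hsph : ∀ᵐ x ∂μ, sq2 x = (d:ℝ)) (w : Fin d → ℝ) :
    Integrable (fun x : Fin d → ℝ => (dot w x)^2) μ := by
  have hmeas : Measurable (fun x : Fin d → ℝ => dot w x) :=
    Finset.measurable_sum _ fun j _ => by fun_prop
  refine Integrable.mono' (integrable_const (sq2 w * d))
    ((hmeas.pow_const 2).aestronglyMeasurable) ?_
  filter_upwards [hsph] with x hx
  rw [Real.norm_eq_abs, abs_of_nonneg (sq_nonneg _)]
  have CS : (∑ j, w j * x j)^2 ≤ (∑ j, (w j)^2) * (∑ j, (x j)^2) := by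
    exact Finset.sum_mul_sq_le_sq_mul_sq Finset.univ w x
  calc (dot w x)^2 ≤ sq2 w * sq2 x := CS
    _ = sq2 w * d := by rw [hx]

lemma ESavg_le {m : ℕ} {g : (Fin m → Bool) → ℝ} {B : ℝ}
    (h : ∑ s : Fin m → Bool, g s ≤ 2^m * B) : ESavg g ≤ B := by
  rw [ESavg]
  have hc : (Fintype.card (Fin m → Bool) : ℝ) = 2^m := by
    have : Fintype.card (Fin m → Bool) = 2^m := by simp [Fintype.card_fun]
    rw [this, Nat.cast_pow, Nat.cast_ofNat]
  rw [hc, div_le_iff₀ (by positivity)]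
  rw [mul_comm]
  exact h

lemma ESavg_Eemp_swap {m n : ℕ} (F : (Fin m → Bool) → Fin n → ℝ) :
    ESavg (fun s => Eemp fun i => F s i) = Eemp fun i => ESavg fun s => F s i := by
  simp only [ESavg, Eemp, div_eq_mul_inv, Finset.sum_mul, Finset.mul_sum]
  rw [Finset.sum_comm]
  exact Finset.sum_congr rfl fun i _ => Finset.sum_congr rfl fun s _ => by ring

lemma avg_swap {m n : ℕ} (c1 c2 : ℝ) (F : Fin n → Fin m → ℝ) :
    c1 * ∑ i, (c2 * ∑ r, F i r) = c2 * ∑ r, (c1 * ∑ i, F i r) := by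
  simp only [Finset.mul_sum]
  rw [Finset.sum_comm]
  exact Finset.sum_congr rfl fun r _ => Finset.sum_congr rfl fun i _ => by ring

lemma dot_mulVec_split {d : ℕ} (M : Matrix (Fin d) (Fin d) ℝ) (z : Fin d → ℝ) :
    dot z (M.mulVec z) = dot z ((M - 1).mulVec z) + sq2 z := by
  rw [Matrix.sub_mulVec, Matrix.one_mulVec]
  simp only [dot, sq2, Pi.sub_apply]
  rw [← Finset.sum_add_distrib]
  exact Finset.sum_congr rfl fun j _ => by ring

end Helpers

/-- if the empirical second-moment matrix of the data is within `1/2` of the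
identity in operator norm, then for every `W`, the expectation over a random diagonal sign
matrix `S` of both the empirical and the population second moment of `f_L(·; WS)` is at most
`C‖W‖_F²/m`. -/
theorem statement15 :
    ∃ C : ℝ, 0 < C ∧
      ∀ (d m n : ℕ) (μ : Measure (Fin d → ℝ)) (a : Fin m → ℝ)
        (W0 : Fin m → Fin d → ℝ) (σ' : ℝ → ℝ) (x : Fin n → Fin d → ℝ),
        2 ≤ d → Even m → IsUniformSphere μ (d : ℝ) →
        (∀ r, a r = 1 ∨ a r = -1) → (∀ r, sq2 (W0 r) = 1) →
        (∀ t, |σ' t| ≤ 1) →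
        (∀ i, sq2 (x i) = (d : ℝ)) →
        (∀ z : Fin d → ℝ,
          |dot z ((Matrix.of (fun i j => Eemp fun t => x t i * x t j) -
              (1 : Matrix (Fin d) (Fin d) ℝ)).mulVec z)| ≤ (1 / 2) * sq2 z) →
        ∀ W : Fin m → Fin d → ℝ,
          ESavg (fun s => Eemp fun i => (fL a W0 σ' (colScale s W) (x i)) ^ 2) ≤
              C * (∑ r, sq2 (W r)) / m ∧
            ESavg (fun s => ∫ xx, (fL a W0 σ' (colScale s W) xx) ^ 2 ∂μ) ≤
              C * (∑ r, sq2 (W r)) / m := by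
  classical
  refine ⟨2, by norm_num, ?_⟩
  intro d m n μ a W0 σ' x hd _hm hμ ha _hW0 hσ _hxn hop W
  have hprob : IsProbabilityMeasure μ := hμ.1
  have hsph : ∀ᵐ xx ∂μ, sq2 xx = (d:ℝ) := hμ.2.1
  have hd0 : 0 < d := lt_of_lt_of_le (by norm_num) hd
  set S := ∑ r, sq2 (W r) with hSdef
  have hSnn : 0 ≤ S :=
    Finset.sum_nonneg fun r _ => Finset.sum_nonneg fun j _ => sq_nonneg _
  have hminv : (0:ℝ) ≤ (m:ℝ)⁻¹ := inv_nonneg.mpr (Nat.cast_nonneg m)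
  have hfinal : ∀ X : ℝ, X ≤ (m:ℝ)⁻¹ * ((3/2) * S) → X ≤ 2 * S / m := by
    intro X hX
    rw [div_eq_mul_inv]
    nlinarith
  constructor
  · -- empirical bound
    rw [ESavg_Eemp_swap (fun s i => (fL a W0 σ' (colScale s W) (x i))^2)]
    have hpt : ∀ i, ESavg (fun s => (fL a W0 σ' (colScale s W) (x i))^2)
        ≤ (m:ℝ)⁻¹ * ∑ r, (dot (W r) (x i))^2 :=
      fun i => ESavg_le (sum_fL_sq_le W0 W (x i) ha hσ)
    have hEi : ∀ z : Fin d → ℝ, Eemp (fun t => (dot z (x t))^2) ≤ (3/2) * sq2 z := by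
      intro z
      rw [quad_emp x z, dot_mulVec_split]
      have h1 := (abs_le.mp (hop z)).2
      linarith
    apply hfinal
    calc Eemp (fun i => ESavg fun s => (fL a W0 σ' (colScale s W) (x i))^2)
        ≤ Eemp (fun i => (m:ℝ)⁻¹ * ∑ r, (dot (W r) (x i))^2) := by
          unfold Eemp
          exact mul_le_mul_of_nonneg_left (Finset.sum_le_sum fun i _ => hpt i)
            (inv_nonneg.mpr (Nat.cast_nonneg n))
      _ = (m:ℝ)⁻¹ * ∑ r, Eemp (fun i => (dot (W r) (x i))^2) := by
          unfold Eemp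
          exact avg_swap _ _ _
      _ ≤ (m:ℝ)⁻¹ * ∑ r, (3/2) * sq2 (W r) :=
          mul_le_mul_of_nonneg_left (Finset.sum_le_sum fun r _ => hEi (W r)) hminv
      _ = (m:ℝ)⁻¹ * ((3/2) * S) := by rw [← Finset.mul_sum]
  · -- population bound
    set g : (Fin m → Bool) → (Fin d → ℝ) → ℝ :=
      fun s xx => (fL a W0 σ' (colScale s W) xx)^2 with hgdef
    apply hfinal
    apply ESavg_le
    set T := Finset.univ.filter (fun s : Fin m → Bool => Integrable (g s) μ) with hTdef
    have hTsub : T ⊆ Finset.univ := Finset.subset_univ T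
    have hint : ∀ s ∈ T, Integrable (g s) μ := fun s hs => (Finset.mem_filter.mp hs).2
    have e1 : ∑ s : Fin m → Bool, ∫ xx, g s xx ∂μ = ∑ s ∈ T, ∫ xx, g s xx ∂μ := by
      symm
      refine Finset.sum_subset hTsub fun s _ hs => ?_
      refine integral_undef ?_
      simpa [hTdef, Finset.mem_filter] using hs
    have e2 : ∑ s ∈ T, ∫ xx, g s xx ∂μ = ∫ xx, ∑ s ∈ T, g s xx ∂μ :=
      (integral_finset_sum T hint).symm
    have hGint : Integrable
        (fun xx : Fin d → ℝ => 2^m * ((m:ℝ)⁻¹ * ∑ r, (dot (W r) xx)^2)) μ :=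
      ((integrable_finset_sum _ fun r _ => int_dot_sq hsph (W r)).const_mul _).const_mul _
    have e3 : ∫ xx, ∑ s ∈ T, g s xx ∂μ
        ≤ ∫ xx, 2^m * ((m:ℝ)⁻¹ * ∑ r, (dot (W r) xx)^2) ∂μ := by
      refine integral_mono (integrable_finset_sum T hint) hGint fun xx => ?_
      calc ∑ s ∈ T, g s xx ≤ ∑ s : Fin m → Bool, g s xx :=
            Finset.sum_le_sum_of_subset_of_nonneg hTsub fun s _ _ => sq_nonneg _
        _ ≤ 2^m * ((m:ℝ)⁻¹ * ∑ r, (dot (W r) xx)^2) := sum_fL_sq_le W0 W xx ha hσ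
    have e4 : ∫ xx, 2^m * ((m:ℝ)⁻¹ * ∑ r, (dot (W r) xx)^2) ∂μ
        = 2^m * ((m:ℝ)⁻¹ * S) := by
      rw [integral_const_mul, integral_const_mul,
        integral_finset_sum _ fun r _ => int_dot_sq hsph (W r)]
      congr 2
      exact Finset.sum_congr rfl fun r _ => second_moment hd0 hμ (W r)
    calc ∑ s : Fin m → Bool, ∫ xx, g s xx ∂μ
        ≤ 2^m * ((m:ℝ)⁻¹ * S) := by rw [e1, e2, ← e4]; exact e3
      _ ≤ 2^m * ((m:ℝ)⁻¹ * ((3/2) * S)) := by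
          refine mul_le_mul_of_nonneg_left (mul_le_mul_of_nonneg_left ?_ hminv)
            (by positivity)
          nlinarith

end NTKQuad
end
end
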